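/- Let (M⁽¹⁾, μ⁽¹⁾) and (M⁽²⁾, μ⁽²⁾) be Lebesgue probability spaces, P_n⁽ⁱ⁾ monotone generating sequences of finite measurable partitions, T_n⁽ⁱ⁾ automorphisms with T_n⁽ⁱ⁾ P_n⁽ⁱ⁾ = P_n⁽ⁱ⁾ and T_n⁽ⁱ⁾ → T⁽ⁱ⁾ weakly. Suppose there exist measure-preserving bijections K_n between the partition quotients M⁽¹⁾/P_n⁽¹⁾ and M⁽²⁾/P_n⁽²⁾ with K_n⁻¹ ∘ T_n⁽²⁾ ∘ K_n = T_n⁽¹⁾ on partition atoms and K_{n+1}(P_n⁽¹⁾) = K_n(P_n⁽¹⁾). Then T⁽¹⁾ and T⁽²⁾ are metrically (measure-theoretically) isomorphic. -/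

import Mathlib

open MeasureTheory Filter
open scoped ENNReal

section helpers
variable {α β M : Type*} [MeasurableSpace α] [MeasurableSpace β]

lemma measSet_image_of_injOn [StandardBorelSpace α] [MeasurableSpace.CountablySeparated β]
    {f : α → β} (hf : Measurable f) {s : Set α} (hs : MeasurableSet s)
    (hinj : Set.InjOn f s) : MeasurableSet (f '' s) := by
  haveI := hs.standardBorel
  have hm : Measurable (fun x : s => f x) := hf.comp measurable_subtype_coe
  have hi : Function.Injective (fun x : s => f x) :=
    fun a b hab => Subtype.ext (hinj a.2 b.2 hab)
  have h2 := (hm.measurableEmbedding hi).measurableSet_range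
  rwa [← Set.image_eq_range] at h2

lemma atom_eq (P : ℕ → M → Set M) (hmem : ∀ n x, x ∈ P n x)
    (hpart : ∀ n x y, P n x = P n y ∨ Disjoint (P n x) (P n y))
    {n : ℕ} {x x' : M} (h : x' ∈ P n x) : P n x' = P n x := by
  rcases hpart n x' x with h' | h'
  · exact h'
  · exact absurd (Set.disjoint_left.1 h' (hmem n x') h) (fun h => h)

lemma atom_mono (P : ℕ → M → Set M) (hmono : ∀ n x, P (n+1) x ⊆ P n x)
    {m n : ℕ} (h : m ≤ n) (x : M) : P n x ⊆ P m x := by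
  induction h with
  | refl => exact subset_rfl
  | step h ih => exact (hmono _ x).trans ih

lemma atom_det (P : ℕ → M → Set M) (hmem : ∀ n x, x ∈ P n x)
    (hpart : ∀ n x y, P n x = P n y ∨ Disjoint (P n x) (P n y))
    (hmono : ∀ n x, P (n+1) x ⊆ P n x)
    {m n : ℕ} (h : m ≤ n) {x x' : M} (he : P n x = P n x') : P m x = P m x' := by
  have hx : x' ∈ P m x := atom_mono P hmono h x (he ▸ hmem n x')
  exact (atom_eq P hmem hpart hx).symm

end helpers

theorem stmt10
    {M₁ M₂ : Type*} [MeasurableSpace M₁] [MeasurableSpace M₂]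
    [StandardBorelSpace M₁] [StandardBorelSpace M₂]
    (μ₁ : Measure M₁) (μ₂ : Measure M₂)
    [IsProbabilityMeasure μ₁] [IsProbabilityMeasure μ₂]
    -- monotone generating sequences of finite partitions, given by atom maps
    (P₁ : ℕ → M₁ → Set M₁) (P₂ : ℕ → M₂ → Set M₂)
    (hP₁mem : ∀ n x, x ∈ P₁ n x) (hP₂mem : ∀ n y, y ∈ P₂ n y)
    (hP₁part : ∀ n x y, P₁ n x = P₁ n y ∨ Disjoint (P₁ n x) (P₁ n y))
    (hP₂part : ∀ n x y, P₂ n x = P₂ n y ∨ Disjoint (P₂ n x) (P₂ n y))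
    (hP₁meas : ∀ n x, MeasurableSet (P₁ n x)) (hP₂meas : ∀ n y, MeasurableSet (P₂ n y))
    (hP₁fin : ∀ n, (Set.range (P₁ n)).Finite) (hP₂fin : ∀ n, (Set.range (P₂ n)).Finite)
    (hP₁mono : ∀ n x, P₁ (n + 1) x ⊆ P₁ n x) (hP₂mono : ∀ n y, P₂ (n + 1) y ⊆ P₂ n y)
    (hP₁gen : ∀ᵐ x ∂μ₁, (⋂ n, P₁ n x) = {x}) (hP₂gen : ∀ᵐ y ∂μ₂, (⋂ n, P₂ n y) = {y})
    -- the automorphisms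
    (T₁ : ℕ → M₁ → M₁) (T₂ : ℕ → M₂ → M₂)
    (hT₁ : ∀ n, MeasurePreserving (T₁ n) μ₁ μ₁ ∧ Function.Bijective (T₁ n))
    (hT₂ : ∀ n, MeasurePreserving (T₂ n) μ₂ μ₂ ∧ Function.Bijective (T₂ n))
    (hT₁P : ∀ n x, T₁ n '' P₁ n x = P₁ n (T₁ n x))
    (hT₂P : ∀ n y, T₂ n '' P₂ n y = P₂ n (T₂ n y))
    (S₁ : M₁ → M₁) (S₂ : M₂ → M₂)
    (hS₁ : MeasurePreserving S₁ μ₁ μ₁ ∧ Function.Bijective S₁)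
    (hS₂ : MeasurePreserving S₂ μ₂ μ₂ ∧ Function.Bijective S₂)
    -- weak convergence T_n → T
    (hw₁ : ∀ A : Set M₁, MeasurableSet A →
      Tendsto (fun n => μ₁ (symmDiff (T₁ n '' A) (S₁ '' A))) atTop (nhds 0))
    (hw₂ : ∀ A : Set M₂, MeasurableSet A →
      Tendsto (fun n => μ₂ (symmDiff (T₂ n '' A) (S₂ '' A))) atTop (nhds 0))
    -- the partition-quotient isomorphisms K_n
    (K : ℕ → Set M₁ → Set M₂)
    (hKatom : ∀ n x, ∃ y, K n (P₁ n x) = P₂ n y)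
    (hKmp : ∀ n x, μ₂ (K n (P₁ n x)) = μ₁ (P₁ n x))
    (hKinj : ∀ n x x', K n (P₁ n x) = K n (P₁ n x') → P₁ n x = P₁ n x')
    (hKsurj : ∀ n y, ∃ x, K n (P₁ n x) = P₂ n y)
    -- K_n⁻¹ ∘ T_n⁽²⁾ ∘ K_n = T_n⁽¹⁾ on atoms
    (hKT : ∀ n x, K n (P₁ n (T₁ n x)) = T₂ n '' K n (P₁ n x))
    -- K_{n+1}(P_n⁽¹⁾) = K_n(P_n⁽¹⁾)
    (hKcoh : ∀ n x, (⋃ y ∈ P₁ n x, K (n + 1) (P₁ (n + 1) y)) = K n (P₁ n x)) :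
    ∃ Φ : M₁ → M₂, MeasurePreserving Φ μ₁ μ₂ ∧
      (∀ᵐ x ∂μ₁, Φ (S₁ x) = S₂ (Φ x)) ∧
      ∃ Ψ : M₂ → M₁, MeasurePreserving Ψ μ₂ μ₁ ∧
        (∀ᵐ x ∂μ₁, Ψ (Φ x) = x) ∧ (∀ᵐ y ∂μ₂, Φ (Ψ y) = y) := by
  classical
  obtain ⟨hS₁mp, hS₁bij⟩ := hS₁
  obtain ⟨hS₂mp, hS₂bij⟩ := hS₂
  -- the spaces are nonempty
  have hM₂ne : (Set.univ : Set M₂).Nonempty := by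
    rcases Set.eq_empty_or_nonempty (Set.univ : Set M₂) with h | h
    · have h1 : μ₂ Set.univ = 1 := measure_univ
      rw [h] at h1; simp at h1
    · exact h
  obtain ⟨y₀, -⟩ := hM₂ne
  have hM₁ne : (Set.univ : Set M₁).Nonempty := by
    rcases Set.eq_empty_or_nonempty (Set.univ : Set M₁) with h | h
    · have h1 : μ₁ Set.univ = 1 := measure_univ
      rw [h] at h1; simp at h1
    · exact h
  obtain ⟨x₀, -⟩ := hM₁ne
  -- measurable versions of the generating sets
  obtain ⟨N₂, hN₂sub, hN₂meas, hN₂null⟩ :=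
    exists_measurable_superset_of_null (ae_iff.1 hP₂gen)
  obtain ⟨N₁, hN₁sub, hN₁meas, hN₁null⟩ :=
    exists_measurable_superset_of_null (ae_iff.1 hP₁gen)
  set G₂ : Set M₂ := N₂ᶜ with hG₂def
  set G₁ : Set M₁ := N₁ᶜ with hG₁def
  have hG₂meas : MeasurableSet G₂ := hN₂meas.compl
  have hG₁meas : MeasurableSet G₁ := hN₁meas.compl
  have hG₂null : μ₂ G₂ᶜ = 0 := by simpa [hG₂def] using hN₂null
  have hG₁null : μ₁ G₁ᶜ = 0 := by simpa [hG₁def] using hN₁null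
  have hG₂prop : ∀ y ∈ G₂, (⋂ n, P₂ n y) = {y} := by
    intro y hy
    by_contra h
    exact hy (hN₂sub h)
  have hG₁prop : ∀ x ∈ G₁, (⋂ n, P₁ n x) = {x} := by
    intro x hx
    by_contra h
    exact hx (hN₁sub h)
  -- basic facts about the K-images of atoms
  have hQatom : ∀ n x z, z ∈ K n (P₁ n x) → K n (P₁ n x) = P₂ n z := by
    intro n x z hz
    obtain ⟨y, hy⟩ := hKatom n x
    rw [hy] at hz ⊢
    exact (atom_eq P₂ hP₂mem hP₂part hz).symm
  have hQmeas : ∀ n x, MeasurableSet (K n (P₁ n x)) := by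
    intro n x
    obtain ⟨y, hy⟩ := hKatom n x
    rw [hy]; exact hP₂meas n y
  have hQcong : ∀ (n : ℕ) {x x'}, P₁ n x = P₁ n x' → K n (P₁ n x) = K n (P₁ n x') := by
    intro n x x' h; rw [h]
  have hQmono : ∀ n x, K (n+1) (P₁ (n+1) x) ⊆ K n (P₁ n x) := by
    intro n x
    rw [← hKcoh n x]
    exact Set.subset_biUnion_of_mem (u := fun y => K (n+1) (P₁ (n+1) y)) (hP₁mem n x)
  have hQchain : ∀ {m n : ℕ}, m ≤ n → ∀ x, K n (P₁ n x) ⊆ K m (P₁ m x) := by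
    intro m n h
    induction h with
    | refl => exact fun x => subset_rfl
    | step h ih => exact fun x => (hQmono _ x).trans (ih x)
  have hQdisjoint : ∀ n x x', P₁ n x ≠ P₁ n x' → Disjoint (K n (P₁ n x)) (K n (P₁ n x')) := by
    intro n x x' hne
    rw [Set.disjoint_left]
    intro z hz hz'
    exact hne (hKinj n x x' ((hQatom n x z hz).trans (hQatom n x' z hz').symm))
  -- the chain formula : K n (P₁ n x) = ⋃ y ∈ P₁ n x, K m (P₁ m y) for m ≥ n
  have hchainK : ∀ (n : ℕ) (x : M₁) (m : ℕ), n ≤ m →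
      K n (P₁ n x) = ⋃ y ∈ P₁ n x, K m (P₁ m y) := by
    intro n x m hnm
    induction hnm with
    | refl =>
        ext z; simp only [Set.mem_iUnion]
        constructor
        · intro hz; exact ⟨x, hP₁mem n x, hz⟩
        · rintro ⟨y, hy, hz⟩
          rwa [hQcong n (atom_eq P₁ hP₁mem hP₁part hy)] at hz
    | @step k hk ih =>
        rw [ih]
        ext z
        simp only [Set.mem_iUnion]
        constructor
        · rintro ⟨y, hy, hz⟩
          rw [← hKcoh k y] at hz
          simp only [Set.mem_iUnion] at hz
          obtain ⟨w, hw, hz⟩ := hz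
          refine ⟨w, ?_, hz⟩
          have h1 : P₁ k y ⊆ P₁ n y := atom_mono P₁ hP₁mono hk y
          have h2 : P₁ n y = P₁ n x := atom_eq P₁ hP₁mem hP₁part hy
          exact h2 ▸ h1 hw
        · rintro ⟨y, hy, hz⟩
          refine ⟨y, hy, ?_⟩
          rw [← hKcoh k y]
          exact Set.subset_biUnion_of_mem (u := fun w => K (k+1) (P₁ (k+1) w)) (hP₁mem k y) hz
  -- the graph relation
  set Gr : Set (M₁ × M₂) := {p | p.2 ∈ G₂ ∧ ∀ n, p.2 ∈ K n (P₁ n p.1)} with hGrdef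
  have hGrmeas : MeasurableSet Gr := by
    have h1 : Gr = (Set.univ ×ˢ G₂) ∩ ⋂ n, ⋃ A ∈ (hP₁fin n).toFinset, (A ×ˢ K n A) := by
      ext p
      simp only [hGrdef, Set.mem_setOf_eq, Set.mem_inter_iff, Set.mem_prod, Set.mem_univ,
        true_and, Set.mem_iInter, Set.mem_iUnion, Set.Finite.mem_toFinset, Set.mem_range,
        exists_prop]
      constructor
      · rintro ⟨h2, h3⟩
        exact ⟨h2, fun n => ⟨P₁ n p.1, ⟨p.1, rfl⟩, hP₁mem n p.1, h3 n⟩⟩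
      · rintro ⟨h2, h3⟩
        refine ⟨h2, fun n => ?_⟩
        obtain ⟨A, ⟨x, hx⟩, hpA, hKA⟩ := h3 n
        subst hx
        rwa [hQcong n (atom_eq P₁ hP₁mem hP₁part hpA)]
      
    rw [h1]
    refine (MeasurableSet.univ.prod hG₂meas).inter (MeasurableSet.iInter fun n => ?_)
    refine (hP₁fin n).toFinset.measurableSet_biUnion fun A hA => ?_
    rw [Set.Finite.mem_toFinset] at hA
    obtain ⟨x, rfl⟩ := hA
    exact (hP₁meas n x).prod (hQmeas n x)
  have hGruniq : ∀ {x y y'}, (x, y) ∈ Gr → (x, y') ∈ Gr → y = y' := by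
    rintro x y y' ⟨hy₂, hyQ⟩ ⟨hy₂', hyQ'⟩
    have h1 : ∀ n, y' ∈ P₂ n y := by
      intro n
      have := hQatom n x y (hyQ n)
      rw [← this]
      exact hyQ' n
    have h2 : y' ∈ ({y} : Set M₂) := by
      rw [← hG₂prop y hy₂]
      exact Set.mem_iInter.2 h1
    exact (h2.symm : y = y')
  have hGrinjOn : Set.InjOn Prod.fst Gr := by
    rintro ⟨x, y⟩ hy ⟨x', y'⟩ hy' (h : x = x')
    subst h
    exact Prod.ext rfl (hGruniq hy hy')
  -- the map Φ
  set Φ : M₁ → M₂ := fun x => if h : ∃ y, (x, y) ∈ Gr then h.choose else y₀ with hΦdef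
  have hΦval : ∀ {x y}, (x, y) ∈ Gr → Φ x = y := by
    intro x y hxy
    have h : ∃ y, (x, y) ∈ Gr := ⟨y, hxy⟩
    simp only [hΦdef, dif_pos h]
    exact hGruniq h.choose_spec hxy
  set G₀ : Set M₁ := Prod.fst '' Gr with hG₀def
  have hΦspec : ∀ {x}, x ∈ G₀ → (x, Φ x) ∈ Gr := by
    rintro x ⟨⟨x', y⟩, hp, (h : x' = x)⟩
    subst h
    rwa [hΦval hp]
  have hG₀meas : MeasurableSet G₀ :=
    measSet_image_of_injOn measurable_fst hGrmeas hGrinjOn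
  have hΦmeas : Measurable Φ := by
    intro B hB
    have h1 : Φ ⁻¹' B =
        (Prod.fst '' (Gr ∩ (Set.univ ×ˢ B))) ∪ (G₀ᶜ ∩ (if y₀ ∈ B then Set.univ else ∅)) := by
      ext x
      simp only [Set.mem_preimage, Set.mem_union, Set.mem_inter_iff, Set.mem_image,
        Set.mem_compl_iff]
      constructor
      · intro hx
        by_cases hx₀ : x ∈ G₀
        · exact Or.inl ⟨(x, Φ x), ⟨hΦspec hx₀, by simp [hx]⟩, rfl⟩
        · refine Or.inr ⟨hx₀, ?_⟩
          have : Φ x = y₀ := by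
            have h : ¬ ∃ y, (x, y) ∈ Gr := by
              intro ⟨y, hy⟩
              exact hx₀ ⟨(x, y), hy, rfl⟩
            simp only [hΦdef, dif_neg h]
          rw [this] at hx
          simp [hx]
      · rintro (⟨⟨x', y⟩, ⟨hGr, hy⟩, (h : x' = x)⟩ | ⟨hx₀, hif⟩)
        · subst h
          rw [hΦval hGr]
          exact hy.2
        · split at hif
          · have : Φ x = y₀ := by
              have h : ¬ ∃ y, (x, y) ∈ Gr := by
                intro ⟨y, hy⟩
                exact hx₀ ⟨(x, y), hy, rfl⟩
              simp only [hΦdef, dif_neg h]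
            rw [this]; assumption
          · simp at hif
    rw [h1]
    refine MeasurableSet.union ?_ ?_
    · exact measSet_image_of_injOn measurable_fst (hGrmeas.inter (MeasurableSet.univ.prod hB))
        (hGrinjOn.mono Set.inter_subset_left)
    · split
      · simpa using hG₀meas.compl
      · simp
  -- G₀ has full measure (the compactness argument)
  have hG₀full : μ₁ G₀ᶜ = 0 := by
    obtain ⟨e, he⟩ := exists_measurableEmbedding_real M₂
    set ρ : Measure ℝ := Measure.map e μ₂ with hρdef
    haveI : IsProbabilityMeasure ρ := Measure.isProbabilityMeasure_map he.measurable.aemeasurable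
    have key : ∀ ε : ℝ≥0∞, 0 < ε → μ₁ G₀ᶜ ≤ ε := by
      intro ε hε
      set κ : ℕ → ℝ≥0∞ := fun m => ((hP₂fin m).toFinset.card : ℝ≥0∞) + 1 with hκdef
      have hκne : ∀ m, κ m ≠ 0 := by intro m; simp [hκdef]
      have hκtop : ∀ m, κ m ≠ ⊤ := by
        intro m
        simp only [hκdef]
        exact ENNReal.add_ne_top.2 ⟨ENNReal.natCast_ne_top _, ENNReal.one_ne_top⟩
      set δ : ℕ → ℝ≥0∞ := fun m => ε * (2 : ℝ≥0∞)⁻¹ ^ (m+1) / κ m with hδdef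
      have hδpos : ∀ m, 0 < δ m := by
        intro m
        refine ENNReal.div_pos (mul_ne_zero hε.ne' (pow_ne_zero _ ?_)) (hκtop m)
        simp
      -- choose compact approximations
      have hchoice : ∀ (m : ℕ) (A : Set M₂), ∃ C : Set ℝ,
          (A ∈ Set.range (P₂ m) → IsCompact C ∧ C ⊆ e '' (A ∩ G₂) ∧
            μ₂ (A \ e ⁻¹' C) ≤ δ m) := by
        intro m A
        by_cases hA : A ∈ Set.range (P₂ m)
        · obtain ⟨y, hy⟩ := hA
          have hAmeas : MeasurableSet A := hy ▸ hP₂meas m y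
          have hsmeas : MeasurableSet (e '' (A ∩ G₂)) :=
            he.measurableSet_image.2 (hAmeas.inter hG₂meas)
          obtain ⟨C, hCsub, hCcomp, hCρ⟩ :=
            hsmeas.exists_isCompact_diff_lt (measure_ne_top ρ _) (hδpos m).ne'
          refine ⟨C, fun _ => ⟨hCcomp, hCsub, ?_⟩⟩
          have h1 : A \ e ⁻¹' C ⊆ ((A ∩ G₂) \ e ⁻¹' C) ∪ G₂ᶜ := by
            intro z hz
            by_cases hzG : z ∈ G₂
            · exact Or.inl ⟨⟨hz.1, hzG⟩, hz.2⟩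
            · exact Or.inr hzG
          have h2 : (A ∩ G₂) \ e ⁻¹' C = e ⁻¹' (e '' (A ∩ G₂) \ C) := by
            rw [Set.preimage_diff, Set.preimage_image_eq _ he.injective]
          have h3 : μ₂ ((A ∩ G₂) \ e ⁻¹' C) = ρ (e '' (A ∩ G₂) \ C) := by
            rw [h2, hρdef, Measure.map_apply he.measurable
              (hsmeas.diff hCcomp.isClosed.measurableSet)]
          calc μ₂ (A \ e ⁻¹' C) ≤ μ₂ (((A ∩ G₂) \ e ⁻¹' C) ∪ G₂ᶜ) := measure_mono h1
            _ ≤ μ₂ ((A ∩ G₂) \ e ⁻¹' C) + μ₂ G₂ᶜ := measure_union_le _ _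
            _ = ρ (e '' (A ∩ G₂) \ C) + 0 := by rw [h3, hG₂null]
            _ ≤ δ m := by rw [add_zero]; exact hCρ.le
        · exact ⟨∅, fun h => absurd h hA⟩
      choose Cc hCc using hchoice
      have hQrange : ∀ (m : ℕ) (x : M₁), K m (P₁ m x) ∈ Set.range (P₂ m) := by
        intro m x
        obtain ⟨y, hy⟩ := hKatom m x
        exact ⟨y, hy.symm⟩
      -- the exceptional sets
      set D : ℕ → Set M₂ := fun m => ⋃ A ∈ (hP₂fin m).toFinset, (A \ e ⁻¹' (Cc m A))
        with hDdef
      have hCmeas : ∀ (m : ℕ) (A : Set M₂), A ∈ Set.range (P₂ m) →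
          MeasurableSet (A \ e ⁻¹' (Cc m A)) := by
        rintro m A hA
        obtain ⟨y, hy⟩ := hA
        exact (hy ▸ hP₂meas m y).diff
          (he.measurable ((hCc m A (⟨y, hy⟩)).1.isClosed.measurableSet))
      have hDmeas : ∀ m, MeasurableSet (D m) := by
        intro m
        refine (hP₂fin m).toFinset.measurableSet_biUnion fun A hA => ?_
        exact hCmeas m A ((hP₂fin m).mem_toFinset.1 hA)
      have hDsmall : ∀ m, μ₂ (D m) ≤ ε * (2 : ℝ≥0∞)⁻¹ ^ (m+1) := by
        intro m
        calc μ₂ (D m) ≤ ∑ A ∈ (hP₂fin m).toFinset, μ₂ (A \ e ⁻¹' (Cc m A)) :=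
              measure_biUnion_finset_le _ _
          _ ≤ ∑ _A ∈ (hP₂fin m).toFinset, δ m := by
              refine Finset.sum_le_sum fun A hA => ?_
              exact (hCc m A ((hP₂fin m).mem_toFinset.1 hA)).2.2
          _ = ((hP₂fin m).toFinset.card : ℝ≥0∞) * δ m := by
              rw [Finset.sum_const, nsmul_eq_mul]
          _ ≤ κ m * δ m := by
              refine mul_le_mul_left ?_ _
              simp [hκdef]
          _ ≤ ε * (2 : ℝ≥0∞)⁻¹ ^ (m+1) := by
              rw [hδdef]
              exact ENNReal.mul_div_le
      set E : Set M₂ := ⋃ m, D m with hEdef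
      have hEsmall : μ₂ E ≤ ε := by
        calc μ₂ E ≤ ∑' m, μ₂ (D m) := measure_iUnion_le _
          _ ≤ ∑' m, ε * (2 : ℝ≥0∞)⁻¹ ^ (m+1) := ENNReal.tsum_le_tsum hDsmall
          _ = ε * ∑' m, (2 : ℝ≥0∞)⁻¹ ^ (m+1) := ENNReal.tsum_mul_left
          _ = ε := by
              have h : ∑' m : ℕ, (2 : ℝ≥0∞)⁻¹ ^ (m+1) = 1 := by
                calc ∑' m : ℕ, (2 : ℝ≥0∞)⁻¹ ^ (m+1)
                    = (∑' m : ℕ, (2 : ℝ≥0∞)⁻¹ ^ m) * (2 : ℝ≥0∞)⁻¹ := by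
                      rw [← ENNReal.tsum_mul_right]
                      exact tsum_congr fun m => pow_succ _ _
                  _ = (1 - (2 : ℝ≥0∞)⁻¹)⁻¹ * (2 : ℝ≥0∞)⁻¹ := by
                      rw [ENNReal.tsum_geometric]
                  _ = 1 := by
                      rw [ENNReal.one_sub_inv_two, inv_inv,
                        ENNReal.mul_inv_cancel two_ne_zero ENNReal.ofNat_ne_top]
              rw [h, mul_one]
      -- the sets R and the bad sets
      set R : ℕ → M₁ → Set M₂ := fun n x =>
        K n (P₁ n x) ∩ ⋂ m ∈ Finset.range (n+1), e ⁻¹' (Cc m (K m (P₁ m x))) with hRdef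
      have hRcong : ∀ (n : ℕ) {x x'}, P₁ n x = P₁ n x' → R n x = R n x' := by
        intro n x x' h
        have hdet : ∀ m, m ≤ n → P₁ m x = P₁ m x' :=
          fun m hm => atom_det P₁ hP₁mem hP₁part hP₁mono hm h
        simp only [hRdef]
        rw [h]
        congr 1
        apply Set.iInter₂_congr
        intro m hm
        rw [hdet m (Nat.lt_succ_iff.1 (Finset.mem_range.1 hm))]
      have hRmono : ∀ n x, R (n+1) x ⊆ R n x := by
        intro n x
        simp only [hRdef]
        refine Set.inter_subset_inter (hQmono n x) ?_
        intro z hz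
        simp only [Set.mem_iInter] at hz ⊢
        intro m hm
        exact hz m (Finset.mem_range.2 (Nat.lt_succ_of_lt (Finset.mem_range.1 hm)))
      set B : ℕ → Set M₁ := fun n => {x | μ₂ (R n x) = 0} with hBdef
      have hBmono : ∀ n, B n ⊆ B (n+1) := by
        intro n x hx
        simp only [hBdef, Set.mem_setOf_eq] at hx ⊢
        exact le_antisymm (hx ▸ measure_mono (hRmono n x)) (zero_le)
      set badF : ℕ → Finset (Set M₁) := fun n =>
        (hP₁fin n).toFinset.filter (fun A => ∃ x, P₁ n x = A ∧ μ₂ (R n x) = 0) with hbadFdef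
      have hBeq : ∀ n, B n = ⋃ A ∈ badF n, A := by
        intro n
        ext x
        simp only [hBdef, Set.mem_setOf_eq, hbadFdef, Set.mem_iUnion, Finset.mem_filter,
          (hP₁fin n).mem_toFinset, Set.mem_range, exists_prop]
        constructor
        · intro hx
          exact ⟨P₁ n x, ⟨⟨x, rfl⟩, x, rfl, hx⟩, hP₁mem n x⟩
        · rintro ⟨A, ⟨-, x', hx', hR'⟩, hxA⟩
          subst hx'
          rw [hRcong n (atom_eq P₁ hP₁mem hP₁part hxA)]
          exact hR'
      have hBmeas : ∀ n, MeasurableSet (B n) := by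
        intro n
        rw [hBeq n]
        refine (badF n).measurableSet_biUnion fun A hA => ?_
        obtain ⟨x, hx, -⟩ := (Finset.mem_filter.1 hA).2
        exact hx ▸ hP₁meas n x
      have hBbound : ∀ n, μ₁ (B n) ≤ ε := by
        intro n
        have hrep : ∀ A ∈ badF n, ∃ x, P₁ n x = A ∧ μ₂ (R n x) = 0 :=
          fun A hA => (Finset.mem_filter.1 hA).2
        have hdisjF : (badF n : Set (Set M₁)).PairwiseDisjoint id := by
          intro A hA A' hA' hne
          obtain ⟨x, hx, -⟩ := hrep A (by exact_mod_cast hA)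
          obtain ⟨x', hx', -⟩ := hrep A' (by exact_mod_cast hA')
          rcases hP₁part n x x' with h | h
          · exact absurd (hx ▸ hx' ▸ h) hne
          · show Disjoint (id A) (id A')
            simp only [id]
            rw [← hx, ← hx']
            exact h
        have h1 : μ₁ (B n) = ∑ A ∈ badF n, μ₁ A := by
          rw [hBeq n]
          refine measure_biUnion_finset hdisjF fun A hA => ?_
          obtain ⟨x, hx, -⟩ := hrep A hA
          exact hx ▸ hP₁meas n x
        have h2 : ∀ A ∈ badF n, μ₁ A ≤ μ₂ (K n A ∩ E) := by
          intro A hA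
          obtain ⟨x, hx, hR0⟩ := hrep A hA
          subst hx
          have hsub2 : K n (P₁ n x) ⊆ (K n (P₁ n x) ∩ E) ∪ R n x := by
            intro z hz
            by_cases hzR : z ∈ R n x
            · exact Or.inr hzR
            · refine Or.inl ⟨hz, ?_⟩
              have : ∃ m, m ≤ n ∧ z ∉ e ⁻¹' (Cc m (K m (P₁ m x))) := by
                by_contra hcon
                push_neg at hcon
                refine hzR ⟨hz, ?_⟩
                simp only [Set.mem_iInter]
                intro m hm
                exact hcon m (Nat.lt_succ_iff.1 (Finset.mem_range.1 hm))
              obtain ⟨m, hmn, hzm⟩ := this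
              have hzQm : z ∈ K m (P₁ m x) := hQchain hmn x hz
              refine Set.mem_iUnion.2 ⟨m, ?_⟩
              simp only [hDdef, Set.mem_iUnion, (hP₂fin m).mem_toFinset]
              refine ⟨K m (P₁ m x), hQrange m x, hzQm, hzm⟩
          calc μ₁ (P₁ n x) = μ₂ (K n (P₁ n x)) := (hKmp n x).symm
            _ ≤ μ₂ ((K n (P₁ n x) ∩ E) ∪ R n x) := measure_mono hsub2
            _ ≤ μ₂ (K n (P₁ n x) ∩ E) + μ₂ (R n x) := measure_union_le _ _
            _ = μ₂ (K n (P₁ n x) ∩ E) := by rw [hR0, add_zero]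
        have h3 : ∑ A ∈ badF n, μ₂ (K n A ∩ E) ≤ μ₂ E := by
          have hKdisj : ((badF n) : Set (Set M₁)).PairwiseDisjoint
              (fun A => K n A ∩ E) := by
            intro A hA A' hA' hne
            obtain ⟨x, hx, -⟩ := hrep A (by exact_mod_cast hA)
            obtain ⟨x', hx', -⟩ := hrep A' (by exact_mod_cast hA')
            have := hQdisjoint n x x' (by rw [hx, hx']; exact hne)
            rw [hx, hx'] at this
            exact (this.mono Set.inter_subset_left Set.inter_subset_left)
          have hKm : ∀ A ∈ badF n, MeasurableSet (K n A ∩ E) := by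
            intro A hA
            obtain ⟨x, hx, -⟩ := hrep A hA
            exact (hx ▸ hQmeas n x).inter (MeasurableSet.iUnion hDmeas)
          rw [← measure_biUnion_finset hKdisj hKm]
          refine measure_mono ?_
          refine Set.iUnion₂_subset fun A hA => Set.inter_subset_right
        calc μ₁ (B n) = ∑ A ∈ badF n, μ₁ A := h1
          _ ≤ ∑ A ∈ badF n, μ₂ (K n A ∩ E) := Finset.sum_le_sum h2
          _ ≤ μ₂ E := h3
          _ ≤ ε := hEsmall
      -- union of bad sets
      have hBub : μ₁ (⋃ n, B n) ≤ ε := by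
        have hmono : Monotone B := monotone_nat_of_le_succ hBmono
        rw [(directed_of_isDirected_le hmono).measure_iUnion]
        exact iSup_le hBbound
      -- the complement of the union of bad sets is contained in G₀
      have hsub : G₀ᶜ ⊆ ⋃ n, B n := by
        intro x hx
        by_contra hxB
        simp only [Set.mem_iUnion, not_exists] at hxB
        set s : ℕ → Set ℝ := fun n => ⋂ m ∈ Finset.range (n+1), Cc m (K m (P₁ m x))
          with hsdef
        have hCcx : ∀ m, IsCompact (Cc m (K m (P₁ m x))) ∧
            Cc m (K m (P₁ m x)) ⊆ e '' (K m (P₁ m x) ∩ G₂) :=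
          fun m => ⟨(hCc m _ (hQrange m x)).1, (hCc m _ (hQrange m x)).2.1⟩
        have hsne : ∀ n, (s n).Nonempty := by
          intro n
          have hRne : (R n x).Nonempty := nonempty_of_measure_ne_zero (hxB n)
          obtain ⟨z, hz1, hz2⟩ := hRne
          refine ⟨e z, ?_⟩
          simp only [hsdef, Set.mem_iInter]
          intro m hm
          have := Set.mem_iInter.1 (Set.mem_iInter.1 (by exact hz2) m) hm
          exact this
        have hsclosed : ∀ n, IsClosed (s n) := by
          intro n
          exact isClosed_biInter fun m _ => (hCcx m).1.isClosed
        have hscompact : IsCompact (s 0) := by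
          have : s 0 = Cc 0 (K 0 (P₁ 0 x)) := by
            simp [hsdef]
          rw [this]
          exact (hCcx 0).1
        have hsmono : ∀ n, s (n+1) ⊆ s n := by
          intro n z hz
          simp only [hsdef, Set.mem_iInter] at hz ⊢
          intro m hm
          exact hz m (Finset.mem_range.2 (Nat.lt_succ_of_lt (Finset.mem_range.1 hm)))
        obtain ⟨t, ht⟩ := IsCompact.nonempty_iInter_of_sequence_nonempty_isCompact_isClosed
          s hsmono hsne hscompact hsclosed
        have htm : ∀ m, t ∈ Cc m (K m (P₁ m x)) := by
          intro m
          have := Set.mem_iInter.1 ht m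
          simp only [hsdef, Set.mem_iInter] at this
          exact this m (Finset.mem_range.2 (Nat.lt_succ_self m))
        have hym : ∀ m, ∃ y, y ∈ K m (P₁ m x) ∩ G₂ ∧ e y = t := by
          intro m
          obtain ⟨y, hy1, hy2⟩ := (hCcx m).2 (htm m)
          exact ⟨y, hy1, hy2⟩
        obtain ⟨y, hy, hey⟩ := hym 0
        have hyall : ∀ m, y ∈ K m (P₁ m x) := by
          intro m
          obtain ⟨y', hy', hey'⟩ := hym m
          have : y' = y := he.injective (hey'.trans hey.symm)
          exact this ▸ hy'.1
        exact hx ⟨(x, y), ⟨hy.2, hyall⟩, rfl⟩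
      exact le_trans (measure_mono hsub) hBub
    by_contra hne
    have h1 : μ₁ G₀ᶜ ≠ ⊤ := measure_ne_top _ _
    have h2 := key (μ₁ G₀ᶜ / 2) (ENNReal.div_pos hne ENNReal.ofNat_ne_top)
    exact absurd h2 (not_le.2 (ENNReal.half_lt_self hne h1))
  -- preimages of atoms
  have hΦpre : ∀ (n : ℕ) (w : M₁), Φ ⁻¹' (K n (P₁ n w)) ∩ G₀ = P₁ n w ∩ G₀ := by
    intro n w
    ext x
    simp only [Set.mem_inter_iff, Set.mem_preimage, and_congr_left_iff]
    intro hx₀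
    have hQx := (hΦspec hx₀).2 n
    constructor
    · intro hΦx
      have h1 : K n (P₁ n x) = K n (P₁ n w) :=
        (hQatom n x (Φ x) hQx).trans (hQatom n w (Φ x) hΦx).symm
      have h2 := hKinj n x w h1
      rw [← h2]; exact hP₁mem n x
    · intro hxw
      rwa [hQcong n (atom_eq P₁ hP₁mem hP₁part hxw).symm]
  have hμpre : ∀ (n : ℕ) (w : M₁), μ₁ (Φ ⁻¹' (K n (P₁ n w))) = μ₁ (P₁ n w) := by
    intro n w
    have h1 : μ₁ (Φ ⁻¹' (K n (P₁ n w))) = μ₁ (Φ ⁻¹' (K n (P₁ n w)) ∩ G₀) :=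
      (measure_inter_conull hG₀full).symm
    have h2 : μ₁ (P₁ n w) = μ₁ (P₁ n w ∩ G₀) := (measure_inter_conull hG₀full).symm
    rw [h1, h2, hΦpre n w]
  -- Φ is measure preserving
  have hν : Measure.map Φ μ₁ = μ₂ := by
    set ν : Measure M₂ := Measure.map Φ μ₁ with hνdef
    haveI hνprob : IsProbabilityMeasure ν := Measure.isProbabilityMeasure_map hΦmeas.aemeasurable
    have hνapp : ∀ B : Set M₂, MeasurableSet B → ν B = μ₁ (Φ ⁻¹' B) := fun B hB =>
      Measure.map_apply hΦmeas hB
    have hatoms : ∀ (n : ℕ) (y : M₂), ν (P₂ n y) = μ₂ (P₂ n y) := by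
      intro n y
      obtain ⟨x, hx⟩ := hKsurj n y
      rw [← hx, hνapp _ (hQmeas n x), hμpre n x, hKmp n x]
    set Pc : Set (Set M₂) := {B | ∃ n y, B = P₂ n y} with hPcdef
    have hScle : ∀ ⦃B : Set M₂⦄, MeasurableSet[MeasurableSpace.generateFrom Pc] B →
        MeasurableSet B := by
      intro B hB
      induction hB with
      | basic u hu =>
          obtain ⟨n, y, rfl⟩ := hu
          exact hP₂meas n y
      | empty => exact MeasurableSet.empty
      | compl u _ ih => exact ih.compl
      | iUnion f _ ih => exact MeasurableSet.iUnion ih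
    have hpi : IsPiSystem Pc := by
      have symmcase : ∀ (n m : ℕ) (y y' : M₂), n ≤ m → (P₂ n y ∩ P₂ m y').Nonempty →
          P₂ n y ∩ P₂ m y' ∈ Pc := by
        intro n m y y' h hne
        obtain ⟨z, hz1, hz2⟩ := hne
        have e1 : P₂ n y = P₂ n z := (atom_eq P₂ hP₂mem hP₂part hz1).symm
        have e2 : P₂ m y' = P₂ m z := (atom_eq P₂ hP₂mem hP₂part hz2).symm
        have e3 : P₂ n y ∩ P₂ m y' = P₂ m y' := by
          rw [e1, e2]
          exact Set.inter_eq_self_of_subset_right (atom_mono P₂ hP₂mono h z)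
        rw [e3]
        exact ⟨m, y', rfl⟩
      rintro B ⟨n, y, rfl⟩ B' ⟨m, y', rfl⟩ hne
      rcases le_total n m with h | h
      · exact symmcase n m y y' h hne
      · rw [Set.inter_comm] at hne ⊢
        exact symmcase m n y' y h hne
    have hagree : ∀ B : Set M₂, MeasurableSet[MeasurableSpace.generateFrom Pc] B → ν B = μ₂ B := by
      refine MeasurableSpace.induction_on_inter (m := MeasurableSpace.generateFrom Pc) (C := fun B _ => ν B = μ₂ B)
        (s := Pc) rfl hpi (by simp) ?_ ?_ ?_
      · rintro B ⟨n, y, rfl⟩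
        exact hatoms n y
      · intro t ht hC
        have htm : MeasurableSet t := hScle ht
        show ν tᶜ = μ₂ tᶜ
        rw [measure_compl (μ := ν) htm (measure_ne_top ν t), measure_compl (μ := μ₂) htm (measure_ne_top μ₂ t),
          hC]
        congr 1
        simp [measure_univ]
      · intro f hdisj hfm hC
        show ν (⋃ i, f i) = μ₂ (⋃ i, f i)
        rw [measure_iUnion hdisj (fun i => hScle (hfm i)),
          measure_iUnion hdisj (fun i => hScle (hfm i))]
        exact tsum_congr hC
    -- enumerate atoms of P₂
    have hlist : ∀ n : ℕ, ∃ L : List (Set M₂),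
        (∀ A ∈ L, A ∈ Set.range (P₂ n)) ∧ ∀ A ∈ Set.range (P₂ n), A ∈ L := by
      intro n
      refine ⟨(hP₂fin n).toFinset.toList, ?_, ?_⟩
      · intro A hA
        rw [Finset.mem_toList, (hP₂fin n).mem_toFinset] at hA
        exact hA
      · intro A hA
        rw [Finset.mem_toList, (hP₂fin n).mem_toFinset]
        exact hA
    choose L hL1 hL2 using hlist
    set A : ℕ → Set M₂ := fun k => ((L (Nat.unpair k).1).getD (Nat.unpair k).2 ∅) with hAdef
    have hAmeas : ∀ k, MeasurableSet (A k) := by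
      intro k
      simp only [hAdef]
      rcases Nat.lt_or_ge (Nat.unpair k).2 (L (Nat.unpair k).1).length with h | h
      · have hmem := List.getD_eq_getElem (L (Nat.unpair k).1) ∅ h
        rw [hmem]
        have : (L (Nat.unpair k).1)[(Nat.unpair k).2] ∈ L (Nat.unpair k).1 :=
          List.getElem_mem _
        obtain ⟨y, hy⟩ := hL1 _ _ this
        rw [← hy]
        exact hP₂meas _ y
      · rw [List.getD_eq_default _ _ h]
        exact MeasurableSet.empty
    have hASc : ∀ k, MeasurableSet[MeasurableSpace.generateFrom Pc] (A k) := by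
      intro k
      simp only [hAdef]
      rcases Nat.lt_or_ge (Nat.unpair k).2 (L (Nat.unpair k).1).length with h | h
      · rw [List.getD_eq_getElem (L (Nat.unpair k).1) ∅ h]
        have : (L (Nat.unpair k).1)[(Nat.unpair k).2] ∈ L (Nat.unpair k).1 :=
          List.getElem_mem _
        obtain ⟨y, hy⟩ := hL1 _ _ this
        rw [← hy]
        exact MeasurableSpace.measurableSet_generateFrom ⟨_, y, rfl⟩
      · rw [List.getD_eq_default _ _ h]
        exact @MeasurableSet.empty _ (MeasurableSpace.generateFrom Pc)
    have hAcover : ∀ (n : ℕ) (y : M₂), ∃ k, A k = P₂ n y := by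
      intro n y
      have hmem : P₂ n y ∈ L n := hL2 n _ ⟨y, rfl⟩
      obtain ⟨i, hi, hget⟩ := List.getElem_of_mem hmem
      refine ⟨Nat.pair n i, ?_⟩
      simp only [hAdef, Nat.unpair_pair]
      rw [List.getD_eq_getElem _ ∅ hi, hget]
    -- the separating map g
    set g : M₂ → ℕ → ℕ := fun y k => if y ∈ A k then 1 else 0 with hgdef
    have hgmeas : Measurable g := by
      refine measurable_pi_lambda g fun k => ?_
      exact Measurable.ite (hAmeas k) measurable_const measurable_const
    have hgSc : Measurable[MeasurableSpace.generateFrom Pc] g := by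
      refine (@measurable_pi_iff M₂ ℕ (fun _ => ℕ) (MeasurableSpace.generateFrom Pc)
        (fun _ => inferInstance) g).mpr fun k => ?_
      exact Measurable.ite (hASc k) measurable_const measurable_const
    have hginj : Set.InjOn g G₂ := by
      intro y hy y' hy' hgy
      have hmem : ∀ n, y' ∈ P₂ n y := by
        intro n
        obtain ⟨k, hk⟩ := hAcover n y
        have h1 : g y k = 1 := by simp [hgdef, hk, hP₂mem n y]
        have h2 : g y' k = 1 := by rw [← hgy]; exact h1
        by_contra hcon
        rw [hgdef] at h2
        simp only [hk] at h2
        rw [if_neg hcon] at h2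
        exact absurd h2 one_ne_zero.symm
      have : y' ∈ ({y} : Set M₂) := by
        rw [← hG₂prop y hy]
        exact Set.mem_iInter.2 hmem
      exact this.symm
    -- every Borel set agrees
    refine Measure.ext fun B hB => ?_
    have hνG₂ : ν G₂ᶜ = 0 := by
      rw [hνapp _ hG₂meas.compl]
      have hsub : Φ ⁻¹' G₂ᶜ ⊆ G₀ᶜ := by
        intro x hx
        by_contra hcon
        rw [Set.notMem_compl_iff] at hcon
        exact hx ((hΦspec hcon).1)
      exact le_antisymm (le_trans (measure_mono hsub) hG₀full.le) (zero_le)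
    have hMset : MeasurableSet (g '' (B ∩ G₂)) :=
      measSet_image_of_injOn hgmeas (hB.inter hG₂meas)
        (hginj.mono Set.inter_subset_right)
    have hBeq2 : B ∩ G₂ = G₂ ∩ g ⁻¹' (g '' (B ∩ G₂)) := by
      ext y
      constructor
      · intro hy
        exact ⟨hy.2, Set.mem_image_of_mem g hy⟩
      · rintro ⟨hyG, y', hy', hgy⟩
        have : y' = y := hginj hy'.2 hyG hgy
        subst this
        exact ⟨hy'.1, hyG⟩
    have hgpreSc : MeasurableSet[MeasurableSpace.generateFrom Pc] (g ⁻¹' (g '' (B ∩ G₂))) := hgSc hMset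
    have hgpre : MeasurableSet (g ⁻¹' (g '' (B ∩ G₂))) := hScle hgpreSc
    calc ν B = ν (B ∩ G₂) := (measure_inter_conull hνG₂).symm
      _ = ν (G₂ ∩ g ⁻¹' (g '' (B ∩ G₂))) := by conv_lhs => rw [hBeq2]
      _ = ν (g ⁻¹' (g '' (B ∩ G₂)) ∩ G₂) := by rw [Set.inter_comm]
      _ = ν (g ⁻¹' (g '' (B ∩ G₂))) := measure_inter_conull hνG₂
      _ = μ₂ (g ⁻¹' (g '' (B ∩ G₂))) := hagree _ hgpreSc
      _ = μ₂ (g ⁻¹' (g '' (B ∩ G₂)) ∩ G₂) := (measure_inter_conull hG₂null).symm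
      _ = μ₂ (G₂ ∩ g ⁻¹' (g '' (B ∩ G₂))) := by rw [Set.inter_comm]
      _ = μ₂ (B ∩ G₂) := by conv_rhs => rw [hBeq2]
      _ = μ₂ B := measure_inter_conull hG₂null
  have hΦmp : MeasurePreserving Φ μ₁ μ₂ := ⟨hΦmeas, hν⟩
  -- the conjugacy
  have hpreμ : ∀ X : Set M₂, MeasurableSet X → μ₁ (Φ ⁻¹' X) = μ₂ X := by
    intro X hX
    rw [← hν, Measure.map_apply hΦmeas hX]
  have hIm2 : ∀ (f : M₂ → M₂), Measurable f → Function.Injective f →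
      ∀ s : Set M₂, MeasurableSet s → MeasurableSet (f '' s) := fun f hf hinj s hs =>
    measSet_image_of_injOn hf hs hinj.injOn
  have hIm1 : ∀ (f : M₁ → M₁), Measurable f → Function.Injective f →
      ∀ s : Set M₁, MeasurableSet s → MeasurableSet (f '' s) := fun f hf hinj s hs =>
    measSet_image_of_injOn hf hs hinj.injOn
  -- per-atom a.e. identification of preimages
  have hpre0 : ∀ (m : ℕ) (v : M₁), μ₁ (symmDiff (Φ ⁻¹' (K m (P₁ m v))) (P₁ m v)) = 0 := by
    intro m v
    have hsub : symmDiff (Φ ⁻¹' (K m (P₁ m v))) (P₁ m v) ⊆ G₀ᶜ := by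
      intro x hx
      by_contra hcon
      rw [Set.notMem_compl_iff] at hcon
      have hiff : x ∈ Φ ⁻¹' (K m (P₁ m v)) ↔ x ∈ P₁ m v := by
        constructor
        · intro h; exact ((hΦpre m v).subset ⟨h, hcon⟩).1
        · intro h; exact ((hΦpre m v).superset ⟨h, hcon⟩).1
      rcases Set.mem_symmDiff.1 hx with ⟨h1, h2⟩ | ⟨h1, h2⟩
      · exact h2 (hiff.1 h1)
      · exact h2 (hiff.2 h1)
    exact le_antisymm (le_trans (measure_mono hsub) hG₀full.le) (zero_le)
  -- the key approximation step
  have hstep : ∀ (n : ℕ) (w : M₁) (m : ℕ), n ≤ m →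
      μ₁ (symmDiff (Φ ⁻¹' (T₂ m '' K n (P₁ n w))) (T₁ m '' P₁ n w)) = 0 := by
    intro n w m hnm
    have h1 : T₂ m '' K n (P₁ n w) = ⋃ y ∈ P₁ n w, K m (P₁ m (T₁ m y)) := by
      rw [hchainK n w m hnm, Set.image_iUnion₂]
      refine Set.iUnion₂_congr fun y _ => ?_
      rw [← hKT m y]
    have h2 : T₁ m '' P₁ n w = ⋃ y ∈ P₁ n w, P₁ m (T₁ m y) := by
      have hcov : P₁ n w = ⋃ y ∈ P₁ n w, P₁ m y := by
        ext z
        simp only [Set.mem_iUnion, exists_prop]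
        constructor
        · intro hz; exact ⟨z, hz, hP₁mem m z⟩
        · rintro ⟨y, hy, hz⟩
          have : P₁ m y ⊆ P₁ n y := atom_mono P₁ hP₁mono hnm y
          exact (atom_eq P₁ hP₁mem hP₁part hy) ▸ this hz
      conv_lhs => rw [hcov]
      rw [Set.image_iUnion₂]
      refine Set.iUnion₂_congr fun y _ => hT₁P m y
    rw [h1, h2]
    -- reindex over the finite collection of level-m atoms
    set Sm : Set (Set M₁) := (fun y => P₁ m (T₁ m y)) '' (P₁ n w) with hSmdef
    have hSmfin : Sm.Finite := ((hP₁fin m).subset (by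
      rintro B ⟨y, -, rfl⟩
      exact ⟨T₁ m y, rfl⟩)).subset subset_rfl
    have h3 : (⋃ y ∈ P₁ n w, K m (P₁ m (T₁ m y))) = ⋃ B ∈ Sm, K m B := by
      ext z
      simp only [Set.mem_iUnion, exists_prop, hSmdef, Set.mem_image]
      constructor
      · rintro ⟨y, hy, hz⟩; exact ⟨P₁ m (T₁ m y), ⟨y, hy, rfl⟩, hz⟩
      · rintro ⟨B, ⟨y, hy, rfl⟩, hz⟩; exact ⟨y, hy, hz⟩
    have h4 : (⋃ y ∈ P₁ n w, P₁ m (T₁ m y)) = ⋃ B ∈ Sm, B := by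
      ext z
      simp only [Set.mem_iUnion, exists_prop, hSmdef, Set.mem_image]
      constructor
      · rintro ⟨y, hy, hz⟩; exact ⟨P₁ m (T₁ m y), ⟨y, hy, rfl⟩, hz⟩
      · rintro ⟨B, ⟨y, hy, rfl⟩, hz⟩; exact ⟨y, hy, hz⟩
    rw [h3, h4, Set.preimage_iUnion₂]
    have hsub : symmDiff (⋃ B ∈ Sm, Φ ⁻¹' (K m B)) (⋃ B ∈ Sm, B) ⊆
        ⋃ B ∈ Sm, symmDiff (Φ ⁻¹' (K m B)) B := by
      intro z hz
      rcases Set.mem_symmDiff.1 hz with ⟨h1', h2'⟩ | ⟨h1', h2'⟩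
      · simp only [Set.mem_iUnion, exists_prop] at h1' h2' ⊢
        obtain ⟨B, hB, hzB⟩ := h1'
        exact ⟨B, hB, Set.mem_symmDiff.2 (Or.inl ⟨hzB, fun hc => h2' ⟨B, hB, hc⟩⟩)⟩
      · simp only [Set.mem_iUnion, exists_prop] at h1' h2' ⊢
        obtain ⟨B, hB, hzB⟩ := h1'
        exact ⟨B, hB, Set.mem_symmDiff.2 (Or.inr ⟨hzB, fun hc => h2' ⟨B, hB, hc⟩⟩)⟩
    refine le_antisymm (le_trans (measure_mono hsub) ?_) (zero_le)
    refine le_trans (measure_biUnion_le μ₁ hSmfin.countable _) ?_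
    refine le_trans (ENNReal.tsum_le_tsum fun B => ?_) (by simp : (∑' _ : ↥Sm, (0:ℝ≥0∞)) ≤ 0)
    rcases B with ⟨B, hB⟩
    obtain ⟨y, -, rfl⟩ := hB
    exact le_of_eq (hpre0 m (T₁ m y))
  -- limit: the a.e. identity for S
  have hlimit : ∀ (n : ℕ) (w : M₁),
      μ₁ (symmDiff (Φ ⁻¹' (S₂ '' K n (P₁ n w))) (S₁ '' P₁ n w)) = 0 := by
    intro n w
    set c := μ₁ (symmDiff (Φ ⁻¹' (S₂ '' K n (P₁ n w))) (S₁ '' P₁ n w)) with hcdef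
    have hle : ∀ m, n ≤ m →
        c ≤ μ₂ (symmDiff (T₂ m '' K n (P₁ n w)) (S₂ '' K n (P₁ n w))) +
          μ₁ (symmDiff (T₁ m '' P₁ n w) (S₁ '' P₁ n w)) := by
      intro m hnm
      have htri : symmDiff (Φ ⁻¹' (S₂ '' K n (P₁ n w))) (S₁ '' P₁ n w) ⊆
          (symmDiff (Φ ⁻¹' (S₂ '' K n (P₁ n w))) (Φ ⁻¹' (T₂ m '' K n (P₁ n w)))) ∪
          ((symmDiff (Φ ⁻¹' (T₂ m '' K n (P₁ n w))) (T₁ m '' P₁ n w)) ∪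
           (symmDiff (T₁ m '' P₁ n w) (S₁ '' P₁ n w))) := by
        have t1 := symmDiff_triangle (Φ ⁻¹' (S₂ '' K n (P₁ n w)))
          (Φ ⁻¹' (T₂ m '' K n (P₁ n w))) (S₁ '' P₁ n w)
        have t2 := symmDiff_triangle (Φ ⁻¹' (T₂ m '' K n (P₁ n w)))
          (T₁ m '' P₁ n w) (S₁ '' P₁ n w)
        calc symmDiff (Φ ⁻¹' (S₂ '' K n (P₁ n w))) (S₁ '' P₁ n w) ⊆ _ := t1
          _ ⊆ _ := Set.union_subset_union_right _ t2
      calc c ≤ μ₁ ((symmDiff (Φ ⁻¹' (S₂ '' K n (P₁ n w))) (Φ ⁻¹' (T₂ m '' K n (P₁ n w)))) ∪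
            ((symmDiff (Φ ⁻¹' (T₂ m '' K n (P₁ n w))) (T₁ m '' P₁ n w)) ∪
             (symmDiff (T₁ m '' P₁ n w) (S₁ '' P₁ n w)))) := measure_mono htri
        _ ≤ μ₁ (symmDiff (Φ ⁻¹' (S₂ '' K n (P₁ n w))) (Φ ⁻¹' (T₂ m '' K n (P₁ n w)))) +
            (μ₁ (symmDiff (Φ ⁻¹' (T₂ m '' K n (P₁ n w))) (T₁ m '' P₁ n w)) +
             μ₁ (symmDiff (T₁ m '' P₁ n w) (S₁ '' P₁ n w))) :=
          le_trans (measure_union_le _ _) (add_le_add le_rfl (measure_union_le _ _))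
        _ = μ₁ (symmDiff (Φ ⁻¹' (S₂ '' K n (P₁ n w))) (Φ ⁻¹' (T₂ m '' K n (P₁ n w)))) +
            μ₁ (symmDiff (T₁ m '' P₁ n w) (S₁ '' P₁ n w)) := by
            rw [hstep n w m hnm, zero_add]
        _ = μ₂ (symmDiff (S₂ '' K n (P₁ n w)) (T₂ m '' K n (P₁ n w))) +
            μ₁ (symmDiff (T₁ m '' P₁ n w) (S₁ '' P₁ n w)) := by
            rw [← Set.preimage_symmDiff, hpreμ _
              ((hIm2 S₂ hS₂mp.measurable hS₂bij.injective _ (hQmeas n w)).symmDiff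
               (hIm2 (T₂ m) (hT₂ m).1.measurable (hT₂ m).2.injective _ (hQmeas n w)))]
        _ = μ₂ (symmDiff (T₂ m '' K n (P₁ n w)) (S₂ '' K n (P₁ n w))) +
            μ₁ (symmDiff (T₁ m '' P₁ n w) (S₁ '' P₁ n w)) := by rw [symmDiff_comm]
    have htends : Tendsto (fun m => μ₂ (symmDiff (T₂ m '' K n (P₁ n w)) (S₂ '' K n (P₁ n w))) +
        μ₁ (symmDiff (T₁ m '' P₁ n w) (S₁ '' P₁ n w))) atTop (nhds 0) := by
      have := (hw₂ (K n (P₁ n w)) (hQmeas n w)).add (hw₁ (P₁ n w) (hP₁meas n w))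
      simpa using this
    have hc0 : c ≤ 0 := ge_of_tendsto htends (eventually_atTop.2 ⟨n, fun m hm => hle m hm⟩)
    exact le_antisymm hc0 (zero_le)
  -- assemble the a.e. statement
  have hconj : ∀ᵐ x ∂μ₁, Φ (S₁ x) = S₂ (Φ x) := by
    set Nb : Set M₁ := ⋃ n, ⋃ B ∈ (hP₁fin n).toFinset,
      symmDiff (Φ ⁻¹' (S₂ '' K n B)) (S₁ '' B) with hNbdef
    have hNbmeas : MeasurableSet Nb := by
      refine MeasurableSet.iUnion fun n => ?_
      refine (hP₁fin n).toFinset.measurableSet_biUnion fun B hB => ?_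
      obtain ⟨v, rfl⟩ := (hP₁fin n).mem_toFinset.1 hB
      exact (hΦmeas (hIm2 S₂ hS₂mp.measurable hS₂bij.injective _ (hQmeas n v))).symmDiff
        (hIm1 S₁ hS₁mp.measurable hS₁bij.injective _ (hP₁meas n v))
    have hNbnull : μ₁ Nb = 0 := by
      rw [← le_zero_iff]
      refine le_trans (measure_iUnion_le _) ?_
      refine le_trans (ENNReal.tsum_le_tsum fun n => ?_)
        (by simp : (∑' _ : ℕ, (0:ℝ≥0∞)) ≤ 0)
      refine le_trans (measure_biUnion_le μ₁ ((hP₁fin n).toFinset : Set (Set M₁)).to_countable _) ?_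
      refine le_trans (ENNReal.tsum_le_tsum fun B => ?_)
        (by simp : (∑' _ : ↥((hP₁fin n).toFinset : Set (Set M₁)), (0:ℝ≥0∞)) ≤ 0)
      rcases B with ⟨B, hB⟩
      obtain ⟨v, rfl⟩ := (hP₁fin n).mem_toFinset.1 (by exact_mod_cast hB)
      exact le_of_eq (hlimit n v)
    have hpreNb : μ₁ (S₁ ⁻¹' Nb) = 0 := by
      rw [hS₁mp.measure_preimage hNbmeas.nullMeasurableSet, hNbnull]
    have hpreG₀ : μ₁ (S₁ ⁻¹' G₀ᶜ) = 0 := by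
      rw [hS₁mp.measure_preimage hG₀meas.compl.nullMeasurableSet, hG₀full]
    rw [ae_iff]
    have hsub : {x | ¬ Φ (S₁ x) = S₂ (Φ x)} ⊆ G₀ᶜ ∪ (S₁ ⁻¹' Nb) := by
      intro x hx
      by_contra hcon
      rw [Set.mem_union, not_or] at hcon
      obtain ⟨hxG₀, hxNb⟩ := hcon
      rw [Set.notMem_compl_iff] at hxG₀
      rw [Set.mem_preimage] at hxNb
      -- Φ (S₁ x) ∈ S₂ '' K n (P₁ n x) for every n
      have hmem : ∀ n, Φ (S₁ x) ∈ S₂ '' K n (P₁ n x) := by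
        intro n
        have hB : P₁ n x ∈ (hP₁fin n).toFinset := (hP₁fin n).mem_toFinset.2 ⟨x, rfl⟩
        have hnot : S₁ x ∉ symmDiff (Φ ⁻¹' (S₂ '' K n (P₁ n x))) (S₁ '' P₁ n x) := by
          intro hc
          exact hxNb (Set.mem_iUnion.2 ⟨n, Set.mem_iUnion₂.2 ⟨P₁ n x, hB, hc⟩⟩)
        have hin : S₁ x ∈ S₁ '' P₁ n x := ⟨x, hP₁mem n x, rfl⟩
        by_contra hc
        exact hnot (Set.mem_symmDiff.2 (Or.inr ⟨hin, hc⟩))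
      -- ⋂ n, K n (P₁ n x) = {Φ x}
      have hsingle : (⋂ n, K n (P₁ n x)) = {Φ x} := by
        have h1 : ∀ n, K n (P₁ n x) = P₂ n (Φ x) :=
          fun n => hQatom n x (Φ x) ((hΦspec hxG₀).2 n)
        have h2 : (⋂ n, K n (P₁ n x)) = ⋂ n, P₂ n (Φ x) := Set.iInter_congr h1
        rw [h2]
        exact hG₂prop (Φ x) (hΦspec hxG₀).1
      have hfin : Φ (S₁ x) ∈ S₂ '' ⋂ n, K n (P₁ n x) := by
        have himg : S₂ '' (⋂ n, K n (P₁ n x)) = ⋂ n, S₂ '' K n (P₁ n x) :=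
          (hS₂bij.injective.injOn).image_iInter_eq
        rw [himg]
        exact Set.mem_iInter.2 hmem
      rw [hsingle] at hfin
      obtain ⟨u, hu, hu2⟩ := hfin
      rw [Set.mem_singleton_iff] at hu
      subst hu
      exact hx hu2.symm
    exact le_antisymm (le_trans (measure_mono hsub)
      (le_trans (measure_union_le _ _) (by rw [hG₀full, hpreNb, add_zero])))
      (zero_le)
  -- the inverse map
  set G₁' : Set M₁ := G₀ ∩ G₁ with hG₁'def
  have hG₁'meas : MeasurableSet G₁' := hG₀meas.inter hG₁meas
  have hG₁'null : μ₁ G₁'ᶜ = 0 := by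
    rw [hG₁'def, Set.compl_inter]
    exact le_antisymm (le_trans (measure_union_le _ _)
      (by rw [hG₀full, hG₁null, add_zero])) (zero_le)
  have hΦinj : Set.InjOn Φ G₁' := by
    intro x hx x' hx' hΦeq
    have h1 : ∀ n, P₁ n x = P₁ n x' := by
      intro n
      refine hKinj n x x' ?_
      have e1 : K n (P₁ n x) = P₂ n (Φ x) := hQatom n x (Φ x) ((hΦspec hx.1).2 n)
      have e2 : K n (P₁ n x') = P₂ n (Φ x') := hQatom n x' (Φ x') ((hΦspec hx'.1).2 n)
      rw [e1, e2, hΦeq]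
    have h2 : x' ∈ ⋂ n, P₁ n x := Set.mem_iInter.2 fun n => (h1 n) ▸ hP₁mem n x'
    rw [hG₁prop x hx.2] at h2
    exact h2.symm
  set I : Set M₂ := Φ '' G₁' with hIdef
  have hImeas : MeasurableSet I := measSet_image_of_injOn hΦmeas hG₁'meas hΦinj
  have hG₁'one : μ₁ G₁' = 1 := by
    have := measure_inter_conull (μ := μ₁) (s := Set.univ) hG₁'null
    rw [Set.univ_inter] at this
    rw [this, measure_univ]
  have hIone : μ₂ I = 1 := by
    have h1 : μ₂ I = μ₁ (Φ ⁻¹' I) := (hpreμ I hImeas).symm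
    have h2 : G₁' ⊆ Φ ⁻¹' I := fun x hx => ⟨x, hx, rfl⟩
    refine le_antisymm prob_le_one ?_
    rw [h1, ← hG₁'one]
    exact measure_mono h2
  have hIfull : μ₂ Iᶜ = 0 := by
    rw [measure_compl hImeas (measure_ne_top μ₂ I), hIone, measure_univ, tsub_self]
  set Ψ : M₂ → M₁ := fun y => if h : ∃ x, x ∈ G₁' ∧ Φ x = y then h.choose else x₀ with hΨdef
  have hΨspec : ∀ {y}, y ∈ I → Ψ y ∈ G₁' ∧ Φ (Ψ y) = y := by
    rintro y ⟨x, hx, rfl⟩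
    have h : ∃ x', x' ∈ G₁' ∧ Φ x' = Φ x := ⟨x, hx, rfl⟩
    simp only [hΨdef, dif_pos h]
    exact h.choose_spec
  have hΨΦ : ∀ {x}, x ∈ G₁' → Ψ (Φ x) = x := by
    intro x hx
    have h : ∃ x', x' ∈ G₁' ∧ Φ x' = Φ x := ⟨x, hx, rfl⟩
    simp only [hΨdef, dif_pos h]
    exact hΦinj h.choose_spec.1 hx h.choose_spec.2
  have hΨpre : ∀ C : Set M₁, Ψ ⁻¹' C ∩ I = Φ '' (C ∩ G₁') := by
    intro C
    ext y
    constructor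
    · rintro ⟨hyC, hyI⟩
      obtain ⟨hΨG, hΦΨ⟩ := hΨspec hyI
      exact ⟨Ψ y, ⟨hyC, hΨG⟩, hΦΨ⟩
    · rintro ⟨x, ⟨hxC, hxG⟩, rfl⟩
      refine ⟨?_, ⟨x, hxG, rfl⟩⟩
      rw [Set.mem_preimage, hΨΦ hxG]
      exact hxC
  have hΨjunk : ∀ {y}, y ∉ I → Ψ y = x₀ := by
    intro y hy
    have h : ¬ ∃ x, x ∈ G₁' ∧ Φ x = y := by
      rintro ⟨x, hx, rfl⟩
      exact hy ⟨x, hx, rfl⟩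
    simp only [hΨdef, dif_neg h]
  have hΨmeas : Measurable Ψ := by
    intro C hC
    have h1 : Ψ ⁻¹' C = (Φ '' (C ∩ G₁')) ∪ (Iᶜ ∩ (if x₀ ∈ C then Set.univ else ∅)) := by
      ext y
      by_cases hy : y ∈ I
      · simp only [Set.mem_preimage, Set.mem_union, Set.mem_inter_iff, Set.mem_compl_iff, hy,
          not_true_eq_false, false_and, or_false]
        constructor
        · intro hyC
          exact (hΨpre C).subset ⟨hyC, hy⟩
        · intro h
          exact ((hΨpre C).superset h).1
      · simp only [Set.mem_preimage, hΨjunk hy, Set.mem_union, Set.mem_inter_iff,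
          Set.mem_compl_iff, hy, not_false_eq_true, true_and]
        constructor
        · intro hx₀
          rw [if_pos hx₀]
          exact Or.inr (Set.mem_univ y)
        · rintro (h | h)
          · exact absurd (Set.image_mono Set.inter_subset_right h) hy
          · split at h
            · assumption
            · exact absurd h (Set.notMem_empty y)
    rw [h1]
    refine MeasurableSet.union
      (measSet_image_of_injOn hΦmeas (hC.inter hG₁'meas) (hΦinj.mono Set.inter_subset_right)) ?_
    split
    · simpa using hImeas.compl
    · simp
  have hΨmp : MeasurePreserving Ψ μ₂ μ₁ := by
    refine ⟨hΨmeas, Measure.ext fun C hC => ?_⟩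
    rw [Measure.map_apply hΨmeas hC]
    have himmeas : MeasurableSet (Φ '' (C ∩ G₁')) :=
      measSet_image_of_injOn hΦmeas (hC.inter hG₁'meas) (hΦinj.mono Set.inter_subset_right)
    have h3 : Φ ⁻¹' (Φ '' (C ∩ G₁')) ∩ G₁' = C ∩ G₁' := by
      ext x
      constructor
      · rintro ⟨⟨x', hx', he⟩, hxG⟩
        have hxx : x' = x := hΦinj hx'.2 hxG he
        subst hxx
        exact ⟨hx'.1, hxG⟩
      · intro hx
        exact ⟨⟨x, hx, rfl⟩, hx.2⟩
    calc μ₂ (Ψ ⁻¹' C) = μ₂ (Ψ ⁻¹' C ∩ I) := (measure_inter_conull hIfull).symm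
      _ = μ₂ (Φ '' (C ∩ G₁')) := by rw [hΨpre C]
      _ = μ₁ (Φ ⁻¹' (Φ '' (C ∩ G₁'))) := (hpreμ _ himmeas).symm
      _ = μ₁ (Φ ⁻¹' (Φ '' (C ∩ G₁')) ∩ G₁') := (measure_inter_conull hG₁'null).symm
      _ = μ₁ (C ∩ G₁') := by rw [h3]
      _ = μ₁ C := measure_inter_conull hG₁'null
  refine ⟨Φ, hΦmp, hconj, Ψ, hΨmp, ?_, ?_⟩
  · rw [ae_iff]
    have hsub : {x | ¬ Ψ (Φ x) = x} ⊆ G₁'ᶜ := by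
      intro x hx
      by_contra hcon
      rw [Set.notMem_compl_iff] at hcon
      exact hx (hΨΦ hcon)
    exact le_antisymm (le_trans (measure_mono hsub) hG₁'null.le) (zero_le)
  · rw [ae_iff]
    have hsub : {y | ¬ Φ (Ψ y) = y} ⊆ Iᶜ := by
      intro y hy
      by_contra hcon
      rw [Set.notMem_compl_iff] at hcon
      exact hy (hΨspec hcon).2
    exact le_antisymm (le_trans (measure_mono hsub) hIfull.le) (zero_le)
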